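/- Let p be a prime with p ≠ 2 and p ≠ 5. For every integer n ≥ 1: if α(p) divides n, then ν_p(F_n) = ν_p(n) + ν_p(F_{α(p)}), and if α(p) does not divide n, then ν_p(F_n) = 0. -/

import Mathlib

open Nat Finset

section Mat
variable (R : Type*) [CommSemiring R]

/-- The Fibonacci matrix. -/
def Qm : Matrix (Fin 2) (Fin 2) R := !![1,1;1,0]

lemma Qm_pow_succ (m : ℕ) :
    (Qm R) ^ (m+1) = (fib (m+1) : R) • Qm R + (fib m : R) • (1 : Matrix (Fin 2) (Fin 2) R) := by
  induction m with
  | zero => simp [pow_one]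
  | succ m ih =>
    rw [pow_succ, ih]
    ext i j
    fin_cases i <;> fin_cases j <;>
      simp [Qm, Matrix.mul_apply, Fin.sum_univ_two, Matrix.one_apply, fib_add_two] <;> ring

lemma Qm_entry (j : ℕ) : ((Qm R) ^ j) 0 1 = (fib j : R) := by
  cases j with
  | zero => simp [Matrix.one_apply]
  | succ m => rw [Qm_pow_succ]; simp [Qm, Matrix.one_apply]

end Mat

lemma fib_mul_expansion (n k : ℕ) (hn : 1 ≤ n) :
    fib (n * k) = ∑ i ∈ range (k+1), k.choose i * (fib n ^ i * (fib (n-1) ^ (k-i) * fib i)) := by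
  obtain ⟨m, rfl⟩ : ∃ m, n = m + 1 := ⟨n - 1, (Nat.succ_pred_eq_of_pos hn).symm⟩
  have hQ : (Qm ℕ) ^ (m+1) = fib (m+1) • Qm ℕ + fib m • (1 : Matrix (Fin 2) (Fin 2) ℕ) := by
    simpa using Qm_pow_succ ℕ m
  have hcomm : Commute (fib (m+1) • Qm ℕ) (fib m • (1 : Matrix (Fin 2) (Fin 2) ℕ)) :=
    ((Commute.one_right (Qm ℕ)).smul_right _).smul_left _
  have h1 : fib ((m+1) * k) = ((Qm ℕ) ^ ((m+1) * k)) 0 1 := by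
    rw [Qm_entry, Nat.cast_id]
  rw [h1, pow_mul, hQ, hcomm.add_pow, Matrix.sum_apply]
  refine Finset.sum_congr rfl fun i hi => ?_
  rw [smul_pow, smul_pow, one_pow]
  rw [show ((k.choose i : ℕ) : Matrix (Fin 2) (Fin 2) ℕ) = (k.choose i) • 1 by
    simp [nsmul_eq_mul]]
  simp only [smul_mul_assoc, mul_smul_comm, mul_one, smul_smul, Matrix.smul_apply, Qm_entry]
  simp only [Nat.cast_id, Nat.add_sub_cancel, smul_eq_mul]
  ring

lemma cassini (n : ℕ) : (fib (n+2) : ℤ) * fib n = (fib (n+1))^2 + (-1)^(n+1) := by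
  induction n with
  | zero => simp
  | succ m ih =>
    have h2 : (fib (m+3) : ℤ) = fib (m+2) + fib (m+1) := by
      rw [show m+3 = (m+1)+2 from rfl, fib_add_two]; push_cast; ring
    have h1 : (fib (m+2) : ℤ) = fib (m+1) + fib m := by
      rw [fib_add_two]; push_cast; ring
    have he : ((-1:ℤ))^(m+2) = -(-1)^(m+1) := by rw [pow_succ]; ring
    rw [show m+1+2 = m+3 from rfl, show m+1+1 = m+2 from rfl, h2, h1, he]
    rw [h1] at ih
    linear_combination -ih

lemma fib_p_sq (p : ℕ) (hp : p.Prime) (hp2 : p ≠ 2) (hp5 : p ≠ 5) :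
    ((fib p : ZMod p))^2 = 1 := by
  haveI : Fact p.Prime := ⟨hp⟩
  have h2ne : (2 : ZMod p) ≠ 0 := by
    have h : ¬ (p ∣ 2) := fun h => hp2 ((Nat.prime_dvd_prime_iff_eq hp Nat.prime_two).mp h)
    intro h0
    exact h ((ZMod.natCast_eq_zero_iff 2 p).mp (by exact_mod_cast h0))
  have h5ne : (5 : ZMod p) ≠ 0 := by
    have h : ¬ (p ∣ 5) := fun h => hp5 ((Nat.prime_dvd_prime_iff_eq hp (by norm_num)).mp h)
    intro h0
    exact h ((ZMod.natCast_eq_zero_iff 5 p).mp (by exact_mod_cast h0))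
  have hodd : Odd p := hp.odd_of_ne_two hp2
  obtain ⟨hhalf, hph⟩ : ∃ h, p = 2*h+1 := by obtain ⟨h, hh⟩ := hodd; exact ⟨h, by omega⟩
  set Q : Matrix (Fin 2) (Fin 2) (ZMod p) := Qm (ZMod p) with hQdef
  set A : Matrix (Fin 2) (Fin 2) (ZMod p) := (2 : ZMod p) • Q - 1 with hAdef
  have hA2 : A ^ 2 = (5 : ZMod p) • (1 : Matrix (Fin 2) (Fin 2) (ZMod p)) := by
    rw [hAdef, hQdef]
    ext i j
    fin_cases i <;> fin_cases j <;>
      · simp [Qm, pow_two, Matrix.mul_apply, Fin.sum_univ_two, Matrix.one_apply,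
          Matrix.sub_apply, Matrix.smul_apply]
        ring
  have hcomm : Commute ((2:ZMod p) • Q) (-1 : Matrix (Fin 2) (Fin 2) (ZMod p)) :=
    ((Commute.neg_one_right Q).smul_left _)
  have hApow : A ^ p = (2:ZMod p)^p • Q^p - 1 := by
    have hsum := hcomm.add_pow p
    rw [show (2:ZMod p) • Q + (-1 : Matrix (Fin 2) (Fin 2) (ZMod p)) = A by
      rw [hAdef, sub_eq_add_neg]] at hsum
    rw [hsum, Finset.sum_range_succ, Finset.range_eq_Ico,
      Finset.sum_eq_sum_Ico_succ_bot hp.pos]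
    have hmid : ∑ i ∈ Ico (0+1) p,
        ((2:ZMod p) • Q)^i * (-1:Matrix (Fin 2) (Fin 2) (ZMod p))^(p-i) * (p.choose i) = 0 := by
      refine Finset.sum_eq_zero fun i hi => ?_
      rw [Finset.mem_Ico] at hi
      have hdvd : p ∣ p.choose i := hp.dvd_choose_self (by omega) hi.2
      have hz : ((p.choose i : ℕ) : Matrix (Fin 2) (Fin 2) (ZMod p)) = 0 := by
        have h0 : ((p.choose i : ℕ) : ZMod p) = 0 := by
          rw [ZMod.natCast_eq_zero_iff]; exact hdvd
        rw [← map_natCast (algebraMap (ZMod p) (Matrix (Fin 2) (Fin 2) (ZMod p))), h0, map_zero]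
      rw [hz, mul_zero]
    rw [hmid, add_zero]
    have e0 : ((2:ZMod p) • Q)^0 * (-1:Matrix (Fin 2) (Fin 2) (ZMod p))^(p-0) * (p.choose 0) =
        -1 := by
      simp only [pow_zero, one_mul, Nat.sub_zero, Nat.choose_zero_right, Nat.cast_one, mul_one]
      exact hodd.neg_one_pow
    have ep : ((2:ZMod p) • Q)^p * (-1:Matrix (Fin 2) (Fin 2) (ZMod p))^(p-p) * (p.choose p) =
        (2:ZMod p)^p • Q^p := by
      simp [smul_pow]
    rw [e0, ep, neg_add_eq_sub]
  have hApow2 : A ^ p = ((5:ZMod p)^hhalf) • A := by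
    calc A ^ p = (A^2)^hhalf * A := by rw [← pow_mul, ← pow_succ, ← hph]
    _ = ((5:ZMod p) • (1:Matrix (Fin 2) (Fin 2) (ZMod p)))^hhalf * A := by rw [hA2]
    _ = ((5:ZMod p)^hhalf) • A := by rw [smul_pow, one_pow, smul_mul_assoc, one_mul]
  have hent := congrFun (congrFun (hApow.symm.trans hApow2) 0) 1
  have hQp : (Q^p) 0 1 = (fib p : ZMod p) := Qm_entry (ZMod p) p
  rw [hAdef, hQdef] at hent
  simp only [Matrix.sub_apply, Matrix.smul_apply, hQdef] at hent
  rw [hQp] at hent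
  simp [Qm, Matrix.one_apply, ZMod.pow_card] at hent
  have hfib : (fib p : ZMod p) = 5 ^ hhalf :=
    mul_left_cancel₀ h2ne (by rw [hent]; ring)
  rw [hfib, ← pow_mul, show hhalf * 2 = p - 1 by omega]
  exact ZMod.pow_card_sub_one_eq_one h5ne

lemma key_dvd (p : ℕ) (hp : p.Prime) (hp2 : p ≠ 2) (hp5 : p ≠ 5) :
    p ∣ fib (p+1) * fib (p-1) := by
  obtain ⟨m, rfl⟩ : ∃ m, p = m + 1 := ⟨p - 1, (Nat.succ_pred_eq_of_pos hp.pos).symm⟩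
  have hodd : Odd (m+1) := hp.odd_of_ne_two hp2
  have hsq := fib_p_sq (m+1) hp hp2 hp5
  have h1 := congrArg (fun z : ℤ => ((z : ℤ) : ZMod (m+1))) (cassini m)
  push_cast at h1
  rw [hodd.neg_one_pow] at h1
  rw [hsq] at h1
  have h0 : ((fib (m+2) * fib m : ℕ) : ZMod (m+1)) = 0 := by
    push_cast
    rw [h1]; ring
  have := (ZMod.natCast_eq_zero_iff _ (m+1)).mp h0
  simpa using this

lemma nu_small (p i : ℕ) (h3 : 3 ≤ p) (hi : 2 ≤ i) : padicValNat p i + 2 ≤ i := by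
  by_contra h
  push_neg at h
  obtain ⟨j, rfl⟩ : ∃ j, i = j + 2 := ⟨i - 2, by omega⟩
  have hd : p^(j+1) ∣ j+2 :=
    dvd_trans (pow_dvd_pow p (by omega)) pow_padicValNat_dvd
  have hle : p^(j+1) ≤ j+2 := Nat.le_of_dvd (by omega) hd
  have h3le : (3:ℕ)^(j+1) ≤ p^(j+1) := Nat.pow_le_pow_left h3 _
  have hj : j < 3^j := Nat.lt_pow_self (by norm_num : 1 < 3)
  have hp3 : (3:ℕ)^(j+1) = 3^j*3 := by rw [pow_succ]
  omega

lemma fib_lte (p : ℕ) (hp : p.Prime) (hp2 : p ≠ 2) (n k : ℕ)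
    (hn : 0 < n) (hk : 0 < k) (hdvd : p ∣ fib n) :
    padicValNat p (fib (n * k)) = padicValNat p (fib n) + padicValNat p k := by
  haveI : Fact p.Prime := ⟨hp⟩
  have hp3 : 3 ≤ p := by have := hp.two_le; omega
  have hn2 : 2 ≤ n := by
    by_contra h
    push_neg at h
    have hn1 : n = 1 := by omega
    subst hn1
    rw [fib_one] at hdvd
    have := Nat.le_of_dvd one_pos hdvd
    have := hp.two_le
    omega
  have hbpos : 0 < fib n := fib_pos.mpr hn
  have hapos : 0 < fib (n-1) := fib_pos.mpr (by omega)
  have ha : ¬ p ∣ fib (n-1) := by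
    intro h
    have cop : Nat.gcd (fib (n-1)) (fib n) = 1 := by
      have := fib_coprime_fib_succ (n-1)
      rwa [show n - 1 + 1 = n by omega] at this
    have : p ∣ 1 := cop ▸ Nat.dvd_gcd h hdvd
    have := Nat.le_of_dvd one_pos this
    omega
  set e := padicValNat p (fib n) with he
  set v := padicValNat p k with hv
  have he1 : 1 ≤ e := by
    rw [he, ← Nat.factorization_def _ hp]
    exact (hp.pow_dvd_iff_le_factorization hbpos.ne').mp (by simpa using hdvd)
  set f : ℕ → ℕ := fun i => k.choose i * (fib n ^ i * (fib (n-1) ^ (k-i) * fib i)) with hf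
  have hsplit : fib (n * k) = f 1 + ∑ i ∈ Ico 2 (k+1), f i := by
    rw [fib_mul_expansion n k (by omega), Finset.range_eq_Ico,
      Finset.sum_eq_sum_Ico_succ_bot (by omega : 0 < k + 1),
      Finset.sum_eq_sum_Ico_succ_bot (by omega : 0 + 1 < k + 1)]
    simp [hf]
  have h1 : f 1 = k * (fib n * fib (n-1) ^ (k-1)) := by simp [hf]
  have hT : padicValNat p (f 1) = v + e := by
    rw [h1, padicValNat.mul hk.ne' (by positivity),
      padicValNat.mul hbpos.ne' (by positivity),
      padicValNat.eq_zero_of_not_dvd (fun h => ha (hp.prime.dvd_of_dvd_pow h))]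
    omega
  have hR : p^(v+e+1) ∣ ∑ i ∈ Ico 2 (k+1), f i := by
    refine Finset.dvd_sum fun i hi => ?_
    rw [Finset.mem_Ico] at hi
    have hi2 : 2 ≤ i := hi.1
    have hik : i ≤ k := by omega
    set νC := padicValNat p (k.choose i) with hνC
    set νi := padicValNat p i with hνi
    have hcpos : 0 < k.choose i := Nat.choose_pos hik
    have hchoose : v ≤ νC + νi := by
      have hid : k.choose i * i = k * ((k-1).choose (i-1)) := by
        have h := Nat.add_one_mul_choose_eq (k-1) (i-1)
        rw [show k-1+1 = k by omega, show i-1+1 = i by omega] at h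
        exact h.symm
      have hc2pos : 0 < (k-1).choose (i-1) := Nat.choose_pos (by omega)
      have hval := congrArg (padicValNat p) hid
      rw [padicValNat.mul hcpos.ne' (by omega),
        padicValNat.mul hk.ne' hc2pos.ne'] at hval
      omega
    have hsmall : νi + 2 ≤ i := nu_small p i hp3 hi2
    have key : v + e + 1 ≤ νC + i * e := by
      have t1 : νi * 1 ≤ νi * e := Nat.mul_le_mul_left _ he1
      have t3 : (νi+2) * e ≤ i * e := Nat.mul_le_mul_right _ hsmall
      have t4 : (νi+2) * e = νi * e + 2 * e := by ring
      have t5 : νi * 1 = νi := by ring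
      linarith
    have d1 : p^νC ∣ k.choose i := pow_padicValNat_dvd
    have d2 : p^(i*e) ∣ fib n ^ i := by
      rw [mul_comm i e, pow_mul]
      exact pow_dvd_pow_of_dvd pow_padicValNat_dvd i
    calc p^(v+e+1) ∣ p^(νC + i*e) := pow_dvd_pow _ key
    _ = p^νC * p^(i*e) := pow_add _ _ _
    _ ∣ k.choose i * fib n ^ i := mul_dvd_mul d1 d2
    _ ∣ f i := by rw [hf]; exact ⟨fib (n-1) ^ (k-i) * fib i, by ring⟩
  have hfpos : 0 < fib (n*k) := fib_pos.mpr (by positivity)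
  have hTpos : 0 < f 1 := by
    rw [h1]
    have h2 : 0 < fib (n-1) ^ (k-1) := pow_pos hapos _
    positivity
  have hd1 : p^(v+e) ∣ fib (n*k) := by
    rw [hsplit]
    refine Nat.dvd_add ?_ (dvd_trans (pow_dvd_pow _ (by omega)) hR)
    calc p^(v+e) = p^(padicValNat p (f 1)) := by rw [hT]
    _ ∣ f 1 := pow_padicValNat_dvd
  have hd2 : ¬ p^(v+e+1) ∣ fib (n*k) := by
    intro h
    have hTd : p^(v+e+1) ∣ f 1 := by
      have : f 1 = fib (n*k) - ∑ i ∈ Ico 2 (k+1), f i := by omega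
      rw [this]
      exact Nat.dvd_sub h hR
    have := (hp.pow_dvd_iff_le_factorization hTpos.ne').mp hTd
    rw [Nat.factorization_def _ hp, hT] at this
    omega
  have lo : v + e ≤ padicValNat p (fib (n*k)) := by
    have := (hp.pow_dvd_iff_le_factorization hfpos.ne').mp hd1
    rwa [Nat.factorization_def _ hp] at this
  have hi' : padicValNat p (fib (n*k)) < v + e + 1 := by
    by_contra h
    push_neg at h
    exact hd2 (dvd_trans (pow_dvd_pow _ h) pow_padicValNat_dvd)
  omega

/-- The restricted period (rank of apparition) of the Fibonacci sequence modulo `p`: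
the least positive `n` such that `p ∣ F n`. -/
noncomputable def fibAlpha (p : ℕ) : ℕ := sInf {n | 0 < n ∧ p ∣ Nat.fib n}

theorem nup_fib (p : ℕ) (hp : p.Prime) (hp2 : p ≠ 2) (hp5 : p ≠ 5)
    (n : ℕ) (hn : 1 ≤ n) :
    (fibAlpha p ∣ n →
      padicValNat p (Nat.fib n) =
        padicValNat p n + padicValNat p (Nat.fib (fibAlpha p))) ∧
    (¬ fibAlpha p ∣ n → padicValNat p (Nat.fib n) = 0) := by
  haveI : Fact p.Prime := ⟨hp⟩
  have hne : {m | 0 < m ∧ p ∣ fib m}.Nonempty := by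
    rcases hp.dvd_mul.mp (key_dvd p hp hp2 hp5) with h | h
    · exact ⟨p+1, by omega, h⟩
    · exact ⟨p-1, by have := hp.two_le; omega, h⟩
  have hα : 0 < fibAlpha p ∧ p ∣ fib (fibAlpha p) := Nat.sInf_mem hne
  have hiff : ∀ m, p ∣ fib m ↔ fibAlpha p ∣ m := by
    intro m
    constructor
    · intro h
      rcases Nat.eq_zero_or_pos m with rfl | hm
      · exact dvd_zero _
      have hg : p ∣ fib (Nat.gcd (fibAlpha p) m) := by
        rw [fib_gcd]; exact Nat.dvd_gcd hα.2 h
      have hgpos : 0 < Nat.gcd (fibAlpha p) m := Nat.gcd_pos_of_pos_left _ hα.1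
      have hle : fibAlpha p ≤ Nat.gcd (fibAlpha p) m := Nat.sInf_le ⟨hgpos, hg⟩
      have hdl : Nat.gcd (fibAlpha p) m ∣ fibAlpha p := Nat.gcd_dvd_left _ _
      have hEq : Nat.gcd (fibAlpha p) m = fibAlpha p :=
        Nat.le_antisymm (Nat.le_of_dvd hα.1 hdl) hle
      rw [← hEq]; exact Nat.gcd_dvd_right _ _
    · intro h; exact dvd_trans hα.2 (fib_dvd _ _ h)
  have hpα : ¬ p ∣ fibAlpha p := by
    intro hpa
    have h2 := hp.two_le
    rcases hp.dvd_mul.mp (key_dvd p hp hp2 hp5) with h | h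
    · have hd := (hiff _).mp h
      have hppp : p ∣ p + 1 := dvd_trans hpa hd
      have h1 : p ∣ 1 := (Nat.dvd_add_right (dvd_refl p)).mp hppp
      have := Nat.le_of_dvd one_pos h1
      omega
    · have hd := (hiff _).mp h
      have hppp : p ∣ p - 1 := dvd_trans hpa hd
      have := Nat.le_of_dvd (by omega) hppp
      omega
  constructor
  · intro hdvd
    obtain ⟨k, rfl⟩ := hdvd
    have hk : 0 < k := by
      rcases Nat.eq_zero_or_pos k with rfl | hk
      · simp at hn
      · exact hk
    have hlte := fib_lte p hp hp2 (fibAlpha p) k hα.1 hk hα.2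
    have hmul : padicValNat p (fibAlpha p * k) =
        padicValNat p (fibAlpha p) + padicValNat p k :=
      padicValNat.mul hα.1.ne' hk.ne'
    have hz : padicValNat p (fibAlpha p) = 0 := padicValNat.eq_zero_of_not_dvd hpα
    omega
  · intro hnd
    exact padicValNat.eq_zero_of_not_dvd (fun h => hnd ((hiff n).mp h))
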